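/- arXiv:1705.00474 — 4 statements merged into one kernel-verified Lean document; each statement's English description precedes it below -/
import Mathlib

section
/- Lemma 1 (fronthaul quantization noise as artificial noise): If the triple (R, Ω, Φ) is feasible, then the triple (R, Ω + Φ, 0) is also feasible, and for any weights w_k ≥ 0 the weighted secrecy objective is unchanged: Σ_{k∈K} w_k · max(f_k(R, Ω + Φ), 0) equals Σ_{k∈K} w_k · max(f_k(R, (Ω + Φ) + 0), 0). Hence setting the artificial-noise covariance Φ to zero incurs no loss of optimality. -/
open Matrix BigOperators Finset ComplexOrder

noncomputable def logDet {p : Type*} [Fintype p] [DecidableEq p] (M : Matrix p p ℂ) : ℝ :=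
  Real.log M.det.re

def blk {I : Type*} {n : I → ℕ} (M : Matrix (Σ i, Fin (n i)) (Σ i, Fin (n i)) ℂ) (i : I) :
    Matrix (Fin (n i)) (Fin (n i)) ℂ :=
  M.submatrix (fun a => ⟨i, a⟩) (fun a => ⟨i, a⟩)

def psub {I : Type*} [DecidableEq I] {n : I → ℕ}
    (M : Matrix (Σ i, Fin (n i)) (Σ i, Fin (n i)) ℂ) (S : Finset I) :
    Matrix {j : Σ i, Fin (n i) // j.1 ∈ S} {j : Σ i, Fin (n i) // j.1 ∈ S} ℂ :=
  M.submatrix Subtype.val Subtype.val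

def IsBlockDiag {I : Type*} {n : I → ℕ}
    (M : Matrix (Σ i, Fin (n i)) (Σ i, Fin (n i)) ℂ) : Prop :=
  ∀ a b : Σ i, Fin (n i), a.1 ≠ b.1 → M a b = 0

noncomputable def gS {I : Type*} [Fintype I] [DecidableEq I] {n : I → ℕ} (S : Finset I)
    (R Ω : Matrix (Σ i, Fin (n i)) (Σ i, Fin (n i)) ℂ) : ℝ :=
  (∑ i ∈ S, logDet (blk (R + Ω) i)) - logDet (psub Ω S)

noncomputable def phi {p : Type*} [Fintype p] [DecidableEq p] (A B : Matrix p p ℂ) : ℝ :=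
  logDet (A + B) - logDet B

noncomputable def fk {I : Type*} [Fintype I] [DecidableEq I] {n : I → ℕ}
    {K : Type*} [Fintype K] [DecidableEq K] {m e : K → ℕ}
    (H : ∀ k : K, Matrix (Fin (m k)) (Σ i, Fin (n i)) ℂ)
    (G : ∀ k : K, Matrix (Fin (e k)) (Σ i, Fin (n i)) ℂ)
    (Sig : ∀ k : K, Matrix (Fin (m k)) (Fin (m k)) ℂ)
    (Z : ∀ k : K, Matrix (Fin (e k)) (Fin (e k)) ℂ)
    (k : K) (R : K → Matrix (Σ i, Fin (n i)) (Σ i, Fin (n i)) ℂ)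
    (Θ : Matrix (Σ i, Fin (n i)) (Σ i, Fin (n i)) ℂ) : ℝ :=
  phi (H k * R k * (H k)ᴴ)
      ((∑ l ∈ Finset.univ.erase k, H k * R l * (H k)ᴴ) + H k * Θ * (H k)ᴴ + Sig k)
  - phi (G k * R k * (G k)ᴴ)
      ((∑ l ∈ Finset.univ.erase k, G k * R l * (G k)ᴴ) + G k * Θ * (G k)ᴴ + Z k)

def Feasible {I : Type*} [Fintype I] [DecidableEq I] {n : I → ℕ}
    {K : Type*} [Fintype K] (C P : I → ℝ)
    (R : K → Matrix (Σ i, Fin (n i)) (Σ i, Fin (n i)) ℂ)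
    (Ω Φ : Matrix (Σ i, Fin (n i)) (Σ i, Fin (n i)) ℂ) : Prop :=
  (∀ k, (R k).PosSemidef) ∧ Ω.PosDef ∧ Φ.PosSemidef ∧ IsBlockDiag Φ ∧
  (∀ S : Finset I, S.Nonempty → gS S (∑ k, R k) Ω ≤ ∑ i ∈ S, C i) ∧
  (∀ i : I, ((blk (∑ k, R k) i).trace).re + ((blk Ω i).trace).re + ((blk Φ i).trace).re ≤ P i)




set_option linter.unusedSectionVars false

section SqrtCompat
open scoped MatrixOrder

noncomputable def Matrix.PosSemidef.sqrt {p : Type*} [Fintype p] [DecidableEq p]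
    {A : Matrix p p ℂ} (_hA : A.PosSemidef) : Matrix p p ℂ :=
  CFC.sqrt A

lemma Matrix.PosSemidef.sqrt_mul_self {p : Type*} [Fintype p] [DecidableEq p]
    {A : Matrix p p ℂ} (hA : A.PosSemidef) : hA.sqrt * hA.sqrt = A :=
  CFC.sqrt_mul_sqrt_self A hA.nonneg

lemma Matrix.PosSemidef.posSemidef_sqrt {p : Type*} [Fintype p] [DecidableEq p]
    {A : Matrix p p ℂ} (hA : A.PosSemidef) : hA.sqrt.PosSemidef :=
  (CFC.sqrt_nonneg A).posSemidef

end SqrtCompat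

namespace Aux
variable {p q : Type*} [Fintype p] [DecidableEq p] [Fintype q] [DecidableEq q]

lemma detre_pos {A : Matrix p p ℂ} (hA : A.PosDef) : 0 < A.det.re :=
  (Complex.pos_iff.mp hA.det_pos).1

lemma det_eq_ofReal {A : Matrix p p ℂ} (hA : A.PosDef) : A.det = (A.det.re : ℂ) :=
  Complex.ext rfl (Complex.pos_iff.mp hA.det_pos).2.symm

/-- congruence by a matrix with injective mulVec preserves PosDef -/
lemma posDef_conj {A : Matrix p p ℂ} (hA : A.PosDef) (B : Matrix p q ℂ)
    (hB : Function.Injective B.mulVec) : (Bᴴ * A * B).PosDef := by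
  refine Matrix.PosDef.of_dotProduct_mulVec_pos ?_ fun x hx => ?_
  · have : (Bᴴ * A * B)ᴴ = Bᴴ * A * B := by
      rw [conjTranspose_mul, conjTranspose_mul, conjTranspose_conjTranspose, hA.1.eq,
        Matrix.mul_assoc]
    exact this
  · have key : star x ⬝ᵥ (Bᴴ * A * B) *ᵥ x = star (B *ᵥ x) ⬝ᵥ A *ᵥ (B *ᵥ x) := by
      simp [← mulVec_mulVec, dotProduct_mulVec, star_mulVec]
    rw [key]
    refine hA.dotProduct_mulVec_pos (x := B *ᵥ x) fun h => hx ?_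
    exact hB (by simpa using h)

lemma posDef_submatrix {A : Matrix p p ℂ} (hA : A.PosDef) (e : q → p)
    (he : Function.Injective e) : (A.submatrix e e).PosDef := by
  have hE : A.submatrix e e =
      ((1 : Matrix p p ℂ).submatrix id e)ᴴ * A * ((1 : Matrix p p ℂ).submatrix id e) := by
    rw [conjTranspose_submatrix, conjTranspose_one]
    rw [show (1 : Matrix p p ℂ).submatrix e id = (1 : Matrix p p ℂ).submatrix e (Equiv.refl p) from rfl,
      one_submatrix_mul]
    rw [show (1 : Matrix p p ℂ).submatrix id e = (1 : Matrix p p ℂ).submatrix (Equiv.refl p) e from rfl,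
      mul_submatrix_one]
    simp [submatrix_submatrix]
  rw [hE]
  refine posDef_conj hA _ fun x y hxy => ?_
  funext b
  have happ : ∀ z : q → ℂ, ((1 : Matrix p p ℂ).submatrix id e *ᵥ z) (e b) = z b := by
    intro z
    simp only [mulVec, dotProduct, submatrix_apply, id_eq, one_apply]
    rw [Finset.sum_eq_single b]
    · simp
    · intro c _ hc
      simp [one_apply, (he.ne_iff.mpr hc).symm]
    · simp
  rw [← happ x, ← happ y, hxy]



lemma sqrt_isUnit {A : Matrix p p ℂ} (hA : A.PosDef) : IsUnit hA.posSemidef.sqrt := by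
  rw [Matrix.isUnit_iff_isUnit_det]
  have h : hA.posSemidef.sqrt.det * hA.posSemidef.sqrt.det = A.det := by
    rw [← Matrix.det_mul, hA.posSemidef.sqrt_mul_self]
  have hd : A.det ≠ 0 := hA.det_pos.ne'
  exact isUnit_of_mul_isUnit_left (by rw [h]; exact hd.isUnit)

lemma one_le_detre_one_add {Q : Matrix p p ℂ} (hQ : Q.PosSemidef) :
    1 ≤ ((1 + Q).det).re := by
  have h1 : (1 + Q : Matrix p p ℂ).IsHermitian := Matrix.isHermitian_one.add hQ.1
  have heig : ∀ i, 1 ≤ h1.eigenvalues i := by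
    intro i
    rw [h1.eigenvalues_eq]
    set v : p → ℂ := ⇑(h1.eigenvectorBasis i) with hv
    have hsplit : star v ⬝ᵥ (1 + Q) *ᵥ v = star v ⬝ᵥ v + star v ⬝ᵥ Q *ᵥ v := by
      rw [add_mulVec, one_mulVec, dotProduct_add]
    rw [hsplit]
    have h2 : RCLike.re (star v ⬝ᵥ v) = 1 := by
      have hnorm : ‖h1.eigenvectorBasis i‖ = 1 := h1.eigenvectorBasis.orthonormal.1 i
      have : (star v ⬝ᵥ v) = ((‖h1.eigenvectorBasis i‖ ^ 2 : ℝ) : ℂ) := by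
        rw [hv, dotProduct_comm, ← EuclideanSpace.inner_eq_star_dotProduct]
        simp [inner_self_eq_norm_sq_to_K]
      rw [this, hnorm]
      norm_num
    rw [map_add, h2]
    have := hQ.re_dotProduct_nonneg v
    linarith
  have hdet : (1 + Q).det = ((∏ i, h1.eigenvalues i : ℝ) : ℂ) := by
    rw [h1.det_eq_prod_eigenvalues]; push_cast; rfl
  rw [hdet, Complex.ofReal_re]
  calc (1:ℝ) = ∏ _i : p, 1 := by simp
    _ ≤ ∏ i, h1.eigenvalues i :=
      Finset.prod_le_prod (by simp) (fun i _ => heig i)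

lemma det_factor {X Φ : Matrix p p ℂ} (hX : X.PosDef) (hΦ : Φ.PosSemidef) :
    (X + Φ).det = X.det * (1 + hΦ.sqrt * X⁻¹ * hΦ.sqrt).det := by
  have hXu : IsUnit X.det := hX.det_pos.ne'.isUnit
  have h1 : X + Φ = X * (1 + X⁻¹ * Φ) := by
    rw [mul_add, mul_one, ← Matrix.mul_assoc, Matrix.mul_nonsing_inv _ hXu, Matrix.one_mul]
  rw [h1, det_mul]
  congr 1
  conv_lhs => rw [← hΦ.sqrt_mul_self, ← Matrix.mul_assoc]
  rw [Matrix.det_one_add_mul_comm, Matrix.mul_assoc]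

lemma psd_conj_herm {F P : Matrix p p ℂ} (hF : F.IsHermitian) (hP : P.PosSemidef) :
    (F * P * F).PosSemidef := by
  have := hP.conjTranspose_mul_mul_same F
  rwa [hF.eq] at this

lemma one_add_psd_posDef {Q : Matrix p p ℂ} (hQ : Q.PosSemidef) :
    (1 + Q : Matrix p p ℂ).PosDef :=
  Matrix.PosDef.one.add_posSemidef hQ

lemma detre_mono {A P : Matrix p p ℂ} (hA : A.PosDef) (hP : P.PosSemidef) :
    A.det.re ≤ ((A + P).det).re := by
  have hQ : (hP.sqrt * A⁻¹ * hP.sqrt).PosSemidef :=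
    psd_conj_herm hP.posSemidef_sqrt.1 hA.inv.posSemidef
  have e := det_factor hA hP
  rw [det_eq_ofReal hA] at e
  rw [e, Complex.re_ofReal_mul]
  have h1 : 1 ≤ ((1 + hP.sqrt * A⁻¹ * hP.sqrt).det).re := one_le_detre_one_add hQ
  nlinarith [detre_pos hA]

lemma inv_sub_inv_psd {A P : Matrix p p ℂ} (hA : A.PosDef) (hP : P.PosSemidef) :
    (A⁻¹ - (A + P)⁻¹).PosSemidef := by
  set Y := A + P with hYdef
  have hY : Y.PosDef := hA.add_posSemidef hP
  set T := hY.posSemidef.sqrt with hTdef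
  have hTps : T.PosSemidef := hY.posSemidef.posSemidef_sqrt
  have hTh : T.IsHermitian := hTps.1
  have hTu : IsUnit T := sqrt_isUnit hY
  have hTd : IsUnit T.det := (Matrix.isUnit_iff_isUnit_det T).mp hTu
  have hTT : T * T = Y := hY.posSemidef.sqrt_mul_self
  have hTl : T⁻¹ * T = 1 := Matrix.nonsing_inv_mul T hTd
  have hTr : T * T⁻¹ = 1 := Matrix.mul_nonsing_inv T hTd
  have hTiH : T⁻¹.IsHermitian := hTh.inv
  set M := T⁻¹ * A * T⁻¹ with hMdef
  have hMpd : M.PosDef := by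
    have h : M = (T⁻¹)ᴴ * A * T⁻¹ := by rw [hTiH.eq]
    rw [h]
    exact posDef_conj hA _ (Matrix.mulVec_injective_iff_isUnit.mpr
      (Matrix.isUnit_nonsing_inv_iff.mpr hTu))
  have hYinv : T⁻¹ * T⁻¹ = Y⁻¹ := by rw [← Matrix.mul_inv_rev, hTT]
  have hsand : T⁻¹ * Y * T⁻¹ = 1 := by
    rw [← hTT]
    calc T⁻¹ * (T * T) * T⁻¹ = (T⁻¹ * T) * (T * T⁻¹) := by simp only [Matrix.mul_assoc]
      _ = 1 := by rw [hTl, hTr, Matrix.one_mul]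
  have h1M : (1 - M).PosSemidef := by
    have h : (1 : Matrix p p ℂ) - M = T⁻¹ * P * T⁻¹ := by
      rw [← hsand, hMdef]
      have hYA : Y - A = P := by rw [hYdef]; abel
      rw [← Matrix.sub_mul, ← Matrix.mul_sub, hYA]
    exact h ▸ psd_conj_herm hTiH hP
  set S := hMpd.posSemidef.sqrt with hSdef
  have hSu : IsUnit S := sqrt_isUnit hMpd
  have hSd : IsUnit S.det := (Matrix.isUnit_iff_isUnit_det S).mp hSu
  have hSl : S⁻¹ * S = 1 := Matrix.nonsing_inv_mul S hSd
  have hSr : S * S⁻¹ = 1 := Matrix.mul_nonsing_inv S hSd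
  have hSS : S * S = M := hMpd.posSemidef.sqrt_mul_self
  have hSiH : S⁻¹.IsHermitian := hMpd.posSemidef.posSemidef_sqrt.1.inv
  have hMinv1 : (M⁻¹ - 1).PosSemidef := by
    have h3 : S⁻¹ * S⁻¹ = M⁻¹ := by rw [← Matrix.mul_inv_rev, hSS]
    have h4 : S⁻¹ * M * S⁻¹ = 1 := by
      rw [← hSS]
      calc S⁻¹ * (S * S) * S⁻¹ = (S⁻¹ * S) * (S * S⁻¹) := by simp only [Matrix.mul_assoc]
        _ = 1 := by rw [hSl, hSr, Matrix.one_mul]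
    have h : M⁻¹ - 1 = S⁻¹ * (1 - M) * S⁻¹ := by
      rw [Matrix.mul_sub, Matrix.sub_mul, Matrix.mul_one, h3, h4]
    exact h ▸ psd_conj_herm hSiH h1M
  have hMinvEq : M⁻¹ = T * A⁻¹ * T := by
    rw [hMdef, Matrix.mul_inv_rev, Matrix.mul_inv_rev,
      Matrix.nonsing_inv_nonsing_inv T hTd, Matrix.mul_assoc]
  have hfin : A⁻¹ - Y⁻¹ = T⁻¹ * (M⁻¹ - 1) * T⁻¹ := by
    rw [hMinvEq, Matrix.mul_sub, Matrix.sub_mul, Matrix.mul_one, hYinv]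
    congr 1
    have hAinv : T⁻¹ * (T * A⁻¹ * T) * T⁻¹ = A⁻¹ := by
      calc T⁻¹ * (T * A⁻¹ * T) * T⁻¹ = (T⁻¹ * T) * A⁻¹ * (T * T⁻¹) := by
              simp only [Matrix.mul_assoc]
        _ = A⁻¹ := by rw [hTl, hTr, Matrix.one_mul, Matrix.mul_one]
    exact hAinv.symm
  rw [hYdef] at hfin
  rw [hfin]
  exact psd_conj_herm hTiH hMinv1

lemma schur_posDef {A : Matrix q q ℂ} {B : Matrix q p ℂ} {D : Matrix p p ℂ}
    (hM : (Matrix.fromBlocks A B Bᴴ D).PosDef) (hD : D.PosDef) :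
    (A - B * D⁻¹ * Bᴴ).PosDef := by
  letI : Invertible D := D.invertibleOfIsUnitDet hD.det_pos.ne'.isUnit
  have hAh : A.IsHermitian := by
    have h := congrArg Matrix.toBlocks₁₁ hM.1
    simpa [Matrix.fromBlocks_conjTranspose, Matrix.IsHermitian] using h
  refine Matrix.PosDef.of_dotProduct_mulVec_pos ?_ ?_
  · have hDi : (D⁻¹).IsHermitian := hD.1.inv
    unfold Matrix.IsHermitian
    rw [Matrix.conjTranspose_sub, hAh.eq, Matrix.conjTranspose_mul, Matrix.conjTranspose_mul,
      Matrix.conjTranspose_conjTranspose, hDi.eq, Matrix.mul_assoc]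
  · intro x hx
    have hz : (x ⊕ᵥ (-((D⁻¹ * Bᴴ) *ᵥ x))) ≠ 0 := by
      intro h; apply hx; funext i
      simpa using congrFun h (Sum.inl i)
    have hpos := hM.dotProduct_mulVec_pos hz
    rw [Matrix.dotProduct_mulVec] at hpos
    have hkey := Matrix.schur_complement_eq₂₂ A B x (-((D⁻¹ * Bᴴ) *ᵥ x)) hD.1
    rw [hkey] at hpos
    simp only [add_neg_cancel, star_zero, Matrix.zero_vecMul, zero_dotProduct,
      zero_add] at hpos
    rwa [← Matrix.dotProduct_mulVec] at hpos

lemma logDet_mono {A P : Matrix p p ℂ} (hA : A.PosDef) (hP : P.PosSemidef) :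
    logDet A ≤ logDet (A + P) :=
  (Real.log_le_log_iff (detre_pos hA) (detre_pos (hA.add_posSemidef hP))).mpr
    (detre_mono hA hP)

lemma logDet_add_psd {X Φ : Matrix p p ℂ} (hX : X.PosDef) (hΦ : Φ.PosSemidef) :
    logDet (X + Φ) = logDet X + Real.log ((1 + hΦ.sqrt * X⁻¹ * hΦ.sqrt).det.re) := by
  have hQ : (hΦ.sqrt * X⁻¹ * hΦ.sqrt).PosSemidef :=
    psd_conj_herm hΦ.posSemidef_sqrt.1 hX.inv.posSemidef
  have h1 : (1:ℝ) ≤ (1 + hΦ.sqrt * X⁻¹ * hΦ.sqrt).det.re := one_le_detre_one_add hQ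
  have e := det_factor hX hΦ
  rw [det_eq_ofReal hX] at e
  unfold logDet
  rw [e, Complex.re_ofReal_mul,
    Real.log_mul (ne_of_gt (detre_pos hX)) (by linarith)]

lemma ratio_log {A P Φ : Matrix p p ℂ} (hA : A.PosDef) (hP : P.PosSemidef)
    (hΦ : Φ.PosSemidef) :
    logDet (A + P + Φ) - logDet (A + P) ≤ logDet (A + Φ) - logDet A := by
  have hAP : (A + P).PosDef := hA.add_posSemidef hP
  have hFh : hΦ.sqrt.IsHermitian := hΦ.posSemidef_sqrt.1
  have hQ1 : (hΦ.sqrt * (A + P)⁻¹ * hΦ.sqrt).PosSemidef :=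
    psd_conj_herm hFh hAP.inv.posSemidef
  have e1 := logDet_add_psd hAP hΦ
  have e2 := logDet_add_psd hA hΦ
  have hD : (hΦ.sqrt * A⁻¹ * hΦ.sqrt - hΦ.sqrt * (A+P)⁻¹ * hΦ.sqrt).PosSemidef := by
    have h := psd_conj_herm hFh (inv_sub_inv_psd hA hP)
    rwa [Matrix.mul_sub, Matrix.sub_mul] at h
  have hle : ((1 + hΦ.sqrt * (A+P)⁻¹ * hΦ.sqrt).det.re)
      ≤ ((1 + hΦ.sqrt * A⁻¹ * hΦ.sqrt).det.re) := by
    have h := detre_mono (one_add_psd_posDef hQ1) hD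
    rwa [show (1 + hΦ.sqrt * (A+P)⁻¹ * hΦ.sqrt) +
        (hΦ.sqrt * A⁻¹ * hΦ.sqrt - hΦ.sqrt * (A+P)⁻¹ * hΦ.sqrt)
        = 1 + hΦ.sqrt * A⁻¹ * hΦ.sqrt by abel] at h
  have hu : (0:ℝ) < (1 + hΦ.sqrt * (A+P)⁻¹ * hΦ.sqrt).det.re :=
    detre_pos (one_add_psd_posDef hQ1)
  have hlog := (Real.log_le_log_iff hu (lt_of_lt_of_le hu hle)).mpr hle
  rw [e1, e2]
  linarith

lemma logDet_split {r : Type*} [Fintype r] [DecidableEq r]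
    {Mbig : Matrix r r ℂ} {D : Matrix p p ℂ} {Sc : Matrix q q ℂ}
    (hdet : Mbig.det = D.det * Sc.det)
    (hD : D.PosDef) (hSc : Sc.PosDef) : logDet Mbig = logDet D + logDet Sc := by
  unfold logDet
  rw [hdet, det_eq_ofReal hD, det_eq_ofReal hSc, ← Complex.ofReal_mul, Complex.ofReal_re,
    Real.log_mul (ne_of_gt (detre_pos hD)) (ne_of_gt (detre_pos hSc))]
  simp

end Aux

namespace Aux
variable {I : Type*} [Fintype I] [DecidableEq I] {n : I → ℕ}

abbrev J (n : I → ℕ) := (Σ i, Fin (n i))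

lemma blk_psd {M : Matrix (Σ i, Fin (n i)) (Σ i, Fin (n i)) ℂ} (hM : M.PosSemidef) (i : I) :
    (blk M i).PosSemidef := hM.submatrix _

lemma blk_posDef {M : Matrix (Σ i, Fin (n i)) (Σ i, Fin (n i)) ℂ} (hM : M.PosDef) (i : I) :
    (blk M i).PosDef := posDef_submatrix hM _ fun a b h => eq_of_heq (Sigma.mk.inj_iff.mp h).2

lemma psub_psd {M : Matrix (Σ i, Fin (n i)) (Σ i, Fin (n i)) ℂ} (hM : M.PosSemidef)
    (S : Finset I) : (psub M S).PosSemidef := hM.submatrix _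

lemma psub_posDef {M : Matrix (Σ i, Fin (n i)) (Σ i, Fin (n i)) ℂ} (hM : M.PosDef)
    (S : Finset I) : (psub M S).PosDef := posDef_submatrix hM _ Subtype.val_injective

lemma blk_add (M N : Matrix (Σ i, Fin (n i)) (Σ i, Fin (n i)) ℂ) (i : I) :
    blk (M + N) i = blk M i + blk N i := rfl

lemma psub_add (M N : Matrix (Σ i, Fin (n i)) (Σ i, Fin (n i)) ℂ) (S : Finset I) :
    psub (M + N) S = psub M S + psub N S := rfl

/-- the reindexing equivalence for `insert a S` -/
def insertEquiv (a : I) (S : Finset I) (ha : a ∉ S) :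
    (Fin (n a) ⊕ {j : Σ i, Fin (n i) // j.1 ∈ S}) ≃ {j : Σ i, Fin (n i) // j.1 ∈ insert a S} where
  toFun := Sum.elim (fun x => ⟨⟨a, x⟩, Finset.mem_insert_self a S⟩)
    (fun j => ⟨j.1, Finset.mem_insert_of_mem j.2⟩)
  invFun j := if h : j.1.1 = a then Sum.inl (Fin.cast (by rw [h]) j.1.2)
    else Sum.inr ⟨j.1, (Finset.mem_insert.mp j.2).resolve_left h⟩
  left_inv := by
    rintro (x | j)
    · simp
    · have h : j.1.1 ≠ a := fun h => ha (h ▸ j.2)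
      simp [h]
  right_inv := by
    rintro ⟨⟨i, x⟩, hmem⟩
    by_cases h : i = a
    · subst h
      simp
    · simp [h]

lemma psub_insert_reindex {M : Matrix (Σ i, Fin (n i)) (Σ i, Fin (n i)) ℂ}
    (hM : M.IsHermitian) (a : I) (S : Finset I) (ha : a ∉ S) :
    (psub M (insert a S)).submatrix (insertEquiv a S ha) (insertEquiv a S ha)
      = Matrix.fromBlocks (blk M a)
          (Matrix.of fun x (j : {j : Σ i, Fin (n i) // j.1 ∈ S}) => M ⟨a, x⟩ j.1)
          (Matrix.of fun x (j : {j : Σ i, Fin (n i) // j.1 ∈ S}) => M ⟨a, x⟩ j.1)ᴴ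
          (psub M S) := by
  ext i j
  cases i with
  | inl x =>
    cases j with
    | inl y => rfl
    | inr k => rfl
  | inr k =>
    cases j with
    | inl y =>
      show M k.1 ⟨a, y⟩ = star (M ⟨a, y⟩ k.1)
      exact (hM.apply _ _).symm
    | inr l => rfl

lemma stepB (Ω Φ : Matrix (Σ i, Fin (n i)) (Σ i, Fin (n i)) ℂ) (hΩ : Ω.PosDef)
    (hΦ : Φ.PosSemidef) (hbd : IsBlockDiag Φ) (S : Finset I) :
    ∑ i ∈ S, (logDet (blk Ω i + blk Φ i) - logDet (blk Ω i))
      ≤ logDet (psub (Ω + Φ) S) - logDet (psub Ω S) := by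
  induction S using Finset.induction_on with
  | empty =>
    have h0 : ∀ (M : Matrix (Σ i, Fin (n i)) (Σ i, Fin (n i)) ℂ),
        logDet (psub M (∅ : Finset I)) = 0 := by
      intro M
      haveI : IsEmpty {j : Σ i, Fin (n i) // j.1 ∈ (∅ : Finset I)} :=
        ⟨fun j => absurd j.2 (by simp)⟩
      unfold logDet
      rw [Matrix.det_isEmpty]
      simp
    simp [h0]
  | @insert a S ha IH =>
    set B : Matrix (Fin (n a)) {j : Σ i, Fin (n i) // j.1 ∈ S} ℂ :=
      Matrix.of fun x j => Ω ⟨a, x⟩ j.1 with hBdef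
    have hΩΦ : (Ω + Φ).PosDef := hΩ.add_posSemidef hΦ
    have hW : (psub Ω S).PosDef := psub_posDef hΩ S
    have hWΦ : (psub (Ω + Φ) S).PosDef := psub_posDef hΩΦ S
    have hr1 := psub_insert_reindex hΩ.1 a S ha
    have hr2 := psub_insert_reindex hΩΦ.1 a S ha
    have hcross : (Matrix.of fun x (j : {j : Σ i, Fin (n i) // j.1 ∈ S}) =>
        (Ω + Φ) ⟨a, x⟩ j.1) = B := by
      ext x j
      have hja : j.1.1 ≠ a := fun h => ha (h ▸ j.2)
      show Ω ⟨a, x⟩ j.1 + Φ ⟨a, x⟩ j.1 = Ω ⟨a, x⟩ j.1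
      rw [hbd ⟨a, x⟩ j.1 (Ne.symm hja), add_zero]
    rw [hcross] at hr2
    have hfrom1 : (Matrix.fromBlocks (blk Ω a) B Bᴴ (psub Ω S)).PosDef := by
      rw [← hr1]
      exact posDef_submatrix (psub_posDef hΩ _) _ (Equiv.injective _)
    have hfrom2 : (Matrix.fromBlocks (blk (Ω + Φ) a) B Bᴴ (psub (Ω + Φ) S)).PosDef := by
      rw [← hr2]
      exact posDef_submatrix (psub_posDef hΩΦ _) _ (Equiv.injective _)
    set Na := B * (psub Ω S)⁻¹ * Bᴴ with hNadef
    set Nb := B * (psub (Ω + Φ) S)⁻¹ * Bᴴ with hNbdef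
    have hSch1 : (blk Ω a - Na).PosDef := schur_posDef hfrom1 hW
    have hSch2 : (blk (Ω + Φ) a - Nb).PosDef := schur_posDef hfrom2 hWΦ
    have hNaPsd : Na.PosSemidef := hW.inv.posSemidef.mul_mul_conjTranspose_same B
    have hdiff : (Na - Nb).PosSemidef := by
      have hinv : ((psub Ω S)⁻¹ - (psub (Ω + Φ) S)⁻¹).PosSemidef := by
        have h := inv_sub_inv_psd hW (psub_psd hΦ S)
        rwa [← psub_add] at h
      have h2 := hinv.mul_mul_conjTranspose_same B
      rwa [Matrix.mul_sub, Matrix.sub_mul] at h2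
    letI : Invertible (psub Ω S) := (psub Ω S).invertibleOfIsUnitDet hW.det_pos.ne'.isUnit
    letI : Invertible (psub (Ω + Φ) S) :=
      (psub (Ω + Φ) S).invertibleOfIsUnitDet hWΦ.det_pos.ne'.isUnit
    have hdet1 : (psub Ω (insert a S)).det = (psub Ω S).det * (blk Ω a - Na).det := by
      rw [← Matrix.det_submatrix_equiv_self (insertEquiv a S ha), hr1,
        Matrix.det_fromBlocks₂₂, Matrix.invOf_eq_nonsing_inv]
    have hdet2 : (psub (Ω + Φ) (insert a S)).det
        = (psub (Ω + Φ) S).det * (blk (Ω + Φ) a - Nb).det := by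
      rw [← Matrix.det_submatrix_equiv_self (insertEquiv a S ha), hr2,
        Matrix.det_fromBlocks₂₂, Matrix.invOf_eq_nonsing_inv]
    have hL1 := logDet_split hdet1 hW hSch1
    have hL2 := logDet_split hdet2 hWΦ hSch2
    have hblkΦ : (blk Φ a).PosSemidef := blk_psd hΦ a
    have hbase : ((blk Ω a - Na) + blk Φ a).PosDef := hSch1.add_posSemidef hblkΦ
    have ht1 : logDet ((blk Ω a - Na) + blk Φ a) ≤ logDet (blk (Ω + Φ) a - Nb) := by
      have h := logDet_mono hbase hdiff
      rwa [show ((blk Ω a - Na) + blk Φ a) + (Na - Nb) = blk (Ω + Φ) a - Nb by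
        rw [blk_add]; abel] at h
    have ht2 : logDet (blk Ω a + blk Φ a) - logDet (blk Ω a)
        ≤ logDet ((blk Ω a - Na) + blk Φ a) - logDet (blk Ω a - Na) := by
      have h := ratio_log hSch1 hNaPsd hblkΦ
      rwa [show (blk Ω a - Na) + Na + blk Φ a = blk Ω a + blk Φ a by abel,
        show (blk Ω a - Na) + Na = blk Ω a by abel] at h
    rw [Finset.sum_insert ha, hL1, hL2]
    linarith

end Aux

theorem lemma1_quantization_as_artificial_noise
    {I : Type*} [Fintype I] [DecidableEq I] {n : I → ℕ}
    {K : Type*} [Fintype K] [DecidableEq K] {m e : K → ℕ}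
    (H : ∀ k : K, Matrix (Fin (m k)) (Σ i, Fin (n i)) ℂ)
    (G : ∀ k : K, Matrix (Fin (e k)) (Σ i, Fin (n i)) ℂ)
    (Sig : ∀ k : K, Matrix (Fin (m k)) (Fin (m k)) ℂ)
    (Z : ∀ k : K, Matrix (Fin (e k)) (Fin (e k)) ℂ)
    (hSig : ∀ k, (Sig k).PosDef) (hZ : ∀ k, (Z k).PosDef)
    (C P : I → ℝ) (hC : ∀ i, 0 ≤ C i) (hP : ∀ i, 0 ≤ P i)
    (R : K → Matrix (Σ i, Fin (n i)) (Σ i, Fin (n i)) ℂ)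
    (Ω Φ : Matrix (Σ i, Fin (n i)) (Σ i, Fin (n i)) ℂ)
    (hfeas : Feasible C P R Ω Φ) :
    Feasible C P R (Ω + Φ) 0 ∧
    ∀ w : K → ℝ, (∀ k, 0 ≤ w k) →
      ∑ k, w k * max (fk H G Sig Z k R (Ω + Φ)) 0
        = ∑ k, w k * max (fk H G Sig Z k R ((Ω + Φ) + 0)) 0 := by
  obtain ⟨hRk, hΩ, hΦ, hbd, hg, hp⟩ := hfeas
  have hR' : (∑ k, R k).PosSemidef := by
    classical
    exact Finset.sum_induction R Matrix.PosSemidef (fun A B hA hB => hA.add hB)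
      Matrix.PosSemidef.zero (fun k _ => hRk k)
  have hΩΦ : (Ω + Φ).PosDef := hΩ.add_posSemidef hΦ
  constructor
  · refine ⟨hRk, hΩΦ, Matrix.PosSemidef.zero, fun a b _ => rfl, ?_, ?_⟩
    · intro S hS
      refine le_trans ?_ (hg S hS)
      unfold gS
      have hper : ∀ i ∈ S,
          logDet (blk ((∑ k, R k) + (Ω + Φ)) i) - logDet (blk ((∑ k, R k) + Ω) i)
            ≤ logDet (blk Ω i + blk Φ i) - logDet (blk Ω i) := by
        intro i _
        have h := Aux.ratio_log (Aux.blk_posDef hΩ i) (Aux.blk_psd hR' i) (Aux.blk_psd hΦ i)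
        have e1 : blk ((∑ k, R k) + (Ω + Φ)) i = blk Ω i + blk (∑ k, R k) i + blk Φ i := by
          rw [Aux.blk_add, Aux.blk_add]; abel
        have e2 : blk ((∑ k, R k) + Ω) i = blk Ω i + blk (∑ k, R k) i := by
          rw [Aux.blk_add]; abel
        rw [e1, e2]
        exact h
      have hsum : ∑ i ∈ S, logDet (blk ((∑ k, R k) + (Ω + Φ)) i)
            - ∑ i ∈ S, logDet (blk ((∑ k, R k) + Ω) i)
          ≤ logDet (psub (Ω + Φ) S) - logDet (psub Ω S) := by
        rw [← Finset.sum_sub_distrib]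
        exact le_trans (Finset.sum_le_sum hper) (Aux.stepB Ω Φ hΩ hΦ hbd S)
      linarith
    · intro i
      have e : (blk (Ω + Φ) i).trace = (blk Ω i).trace + (blk Φ i).trace := by
        rw [Aux.blk_add, Matrix.trace_add]
      have e0 : (blk (0 : Matrix (Σ i, Fin (n i)) (Σ i, Fin (n i)) ℂ) i).trace = 0 := by
        have : blk (0 : Matrix (Σ i, Fin (n i)) (Σ i, Fin (n i)) ℂ) i = 0 := rfl
        rw [this, Matrix.trace_zero]
      rw [e, e0]
      have := hp i
      simp only [Complex.add_re, Complex.zero_re]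
      linarith
  · intro w _
    simp only [add_zero]
end

section
/- Block-diagonal domination for the inverse of a positive definite block matrix: for every Hermitian positive definite matrix M indexed by J and every i ∈ I, the i-th diagonal block of the inverse dominates the inverse of the i-th diagonal block, i.e., (M⁻¹)_{ii} − (M_{ii})⁻¹ is Hermitian positive semidefinite. -/
open Matrix BigOperators Finset ComplexOrder

section Aux

variable {I : Type*} [Fintype I] [DecidableEq I] {n : I → ℕ}

/-- Embed a vector on block `i` into the full index type by zero-padding. -/
def emb (i : I) (x : Fin (n i) → ℂ) : (Σ j, Fin (n j)) → ℂ :=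
  fun p => if h : p.1 = i then x (h ▸ p.2) else 0

@[simp] lemma emb_apply (i : I) (x : Fin (n i) → ℂ) (a : Fin (n i)) :
    emb i x ⟨i, a⟩ = x a := by
  simp [emb]

lemma emb_ne_zero {i : I} {x : Fin (n i) → ℂ} (hx : x ≠ 0) : emb i x ≠ 0 := by
  intro h
  apply hx
  funext a
  have := congrFun h ⟨i, a⟩
  simpa using this

lemma mulVec_emb (A : Matrix (Σ j, Fin (n j)) (Σ j, Fin (n j)) ℂ) (i : I)
    (v : Fin (n i) → ℂ) (p : Σ j, Fin (n j)) :
    (A *ᵥ emb i v) p = ∑ b, A p ⟨i, b⟩ * v b := by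
  rw [mulVec, dotProduct, ← Finset.univ_sigma_univ, Finset.sum_sigma]
  rw [Finset.sum_eq_single i]
  · simp
  · intro j _ hj
    apply Finset.sum_eq_zero
    intro b _
    simp [emb, hj]
  · simp

lemma star_emb_dot (i : I) (u : Fin (n i) → ℂ) (w : (Σ j, Fin (n j)) → ℂ) :
    star (emb i u) ⬝ᵥ w = ∑ a, star (u a) * w ⟨i, a⟩ := by
  rw [dotProduct, ← Finset.univ_sigma_univ, Finset.sum_sigma]
  rw [Finset.sum_eq_single i]
  · simp
  · intro j _ hj
    apply Finset.sum_eq_zero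
    intro b _
    simp [emb, hj]
  · simp

lemma star_emb_dot_mulVec (A : Matrix (Σ j, Fin (n j)) (Σ j, Fin (n j)) ℂ) (i : I)
    (u v : Fin (n i) → ℂ) :
    star (emb i u) ⬝ᵥ (A *ᵥ emb i v) = star u ⬝ᵥ (blk A i *ᵥ v) := by
  rw [star_emb_dot]
  simp only [mulVec_emb]
  simp [dotProduct, mulVec, blk, submatrix_apply]

lemma star_emb_dot_emb (i : I) (u v : Fin (n i) → ℂ) :
    star (emb i u) ⬝ᵥ emb i v = star u ⬝ᵥ v := by
  rw [star_emb_dot]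
  simp [dotProduct]

lemma blk_isHermitian {A : Matrix (Σ j, Fin (n j)) (Σ j, Fin (n j)) ℂ}
    (hA : A.IsHermitian) (i : I) : (blk A i).IsHermitian := by
  ext a b
  simpa [blk, conjTranspose_apply] using congrFun (congrFun hA ⟨i, a⟩) ⟨i, b⟩

lemma blk_posDef {M : Matrix (Σ j, Fin (n j)) (Σ j, Fin (n j)) ℂ}
    (hM : M.PosDef) (i : I) : (blk M i).PosDef := by
  refine PosDef.of_dotProduct_mulVec_pos (blk_isHermitian hM.isHermitian i) fun x hx => ?_
  rw [← star_emb_dot_mulVec]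
  exact hM.dotProduct_mulVec_pos (emb_ne_zero hx)

/-- For a Hermitian matrix, move it across the dot product. -/
lemma herm_dot {m : Type*} [Fintype m] {A : Matrix m m ℂ} (hA : A.IsHermitian)
    (u v : m → ℂ) : star u ⬝ᵥ (A *ᵥ v) = star (A *ᵥ u) ⬝ᵥ v := by
  rw [star_mulVec, dotProduct_mulVec, hA.eq]

end Aux

theorem inv_diag_block_dominates_block_inv
    {I : Type*} [Fintype I] [DecidableEq I] {n : I → ℕ}
    (M : Matrix (Σ i, Fin (n i)) (Σ i, Fin (n i)) ℂ) (hM : M.PosDef) (i : I) :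
    (blk M⁻¹ i - (blk M i)⁻¹).PosSemidef := by
  have hB : (blk M i).PosDef := blk_posDef hM i
  have hBinv : (blk M i)⁻¹.PosDef := hB.inv
  have hMinv : M⁻¹.PosDef := hM.inv
  haveI := hM.isUnit.invertible
  haveI := hB.isUnit.invertible
  refine PosSemidef.of_dotProduct_mulVec_nonneg ?_ ?_
  · exact (blk_isHermitian hMinv.isHermitian i).sub hBinv.isHermitian
  · intro x
    set u : Fin (n i) → ℂ := (blk M i)⁻¹ *ᵥ x with hu
    set y := emb i u with hy
    set e := emb i x with he
    set w : (Σ j, Fin (n j)) → ℂ := M⁻¹ *ᵥ e with hw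
    have hMw : M *ᵥ w = e := by
      rw [hw, mulVec_mulVec, Matrix.mul_nonsing_inv _ (isUnit_iff_isUnit_det _ |>.1 hM.isUnit),
        one_mulVec]
    have hBu : blk M i *ᵥ u = x := by
      rw [hu, mulVec_mulVec, Matrix.mul_nonsing_inv _ (isUnit_iff_isUnit_det _ |>.1 hB.isUnit),
        one_mulVec]
    -- key identity
    have key : star (w - y) ⬝ᵥ (M *ᵥ (w - y))
        = star e ⬝ᵥ (M⁻¹ *ᵥ e) - star x ⬝ᵥ ((blk M i)⁻¹ *ᵥ x) := by
      have h1 : star w ⬝ᵥ (M *ᵥ w) = star e ⬝ᵥ (M⁻¹ *ᵥ e) := by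
        rw [hMw, hw, ← herm_dot hMinv.isHermitian]
      have h2 : star w ⬝ᵥ (M *ᵥ y) = star x ⬝ᵥ u := by
        rw [herm_dot hM.isHermitian, hMw, he, hy, star_emb_dot_emb]
      have h3 : star y ⬝ᵥ (M *ᵥ w) = star u ⬝ᵥ x := by
        rw [hMw, he, hy, star_emb_dot_emb]
      have h4 : star y ⬝ᵥ (M *ᵥ y) = star u ⬝ᵥ x := by
        rw [hy, star_emb_dot_mulVec, hBu]
      have h5 : star x ⬝ᵥ u = star x ⬝ᵥ ((blk M i)⁻¹ *ᵥ x) := rfl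
      rw [mulVec_sub, star_sub, sub_dotProduct, dotProduct_sub, dotProduct_sub,
        h1, h2, h3, h4, h5]
      ring
    have hnn : 0 ≤ star (w - y) ⬝ᵥ (M *ᵥ (w - y)) := hM.posSemidef.dotProduct_mulVec_nonneg (w - y)
    have hblk : star x ⬝ᵥ (blk M⁻¹ i *ᵥ x) = star e ⬝ᵥ (M⁻¹ *ᵥ e) := by
      rw [he, star_emb_dot_mulVec]
    rw [sub_mulVec, dotProduct_sub, hblk]
    exact key ▸ hnn
end

section
/- Feasibility is preserved under Loewner decrease of the per-user covariances: if the triple (R, Ω, 0) is feasible and R' = (R'_k)_{k∈K} is a family of Hermitian positive semidefinite matrices indexed by J with R_k − R'_k Hermitian positive semidefinite for every k ∈ K, then (R', Ω, 0) is feasible. In particular, the precoders obtained by rank reduction from a feasible solution of the relaxed problem satisfy the fronthaul capacity and per-RU power constraints. -/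
open Matrix BigOperators Finset ComplexOrder

section Aux
variable {p : Type*} [Fintype p] [DecidableEq p]

lemma psd_sum {K : Type*} [Fintype K] (R : K → Matrix p p ℂ) (h : ∀ k, (R k).PosSemidef) :
    (∑ k, R k).PosSemidef :=
  Finset.sum_induction R _ (fun a b ha hb => ha.add hb) Matrix.PosSemidef.zero
    (fun k _ => h k)

lemma psd_diag_re_nonneg {N : Matrix p p ℂ} (hN : N.PosSemidef) (a : p) : 0 ≤ (N a a).re := by
  have h := hN.dotProduct_mulVec_nonneg (Pi.single a 1)
  simp [dotProduct, mulVec, Pi.single_apply] at h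
  simpa using (Complex.le_def.mp h).1

lemma posdef_submatrix {m : Type*} [Fintype m] [DecidableEq m] {M : Matrix p p ℂ}
    (hM : M.PosDef) {e : m → p} (he : Function.Injective e) :
    (M.submatrix e e).PosDef := by
  set B : Matrix p m ℂ := (1 : Matrix p p ℂ).submatrix id e with hB
  have hsub : M.submatrix e e = Bᴴ * M * B := by
    rw [hB, (by simp : M = 1 * M * 1), submatrix_mul (he₂ := Function.bijective_id),
      submatrix_mul (he₂ := Function.bijective_id), submatrix_id_id]
    simp [conjTranspose_submatrix]
  refine Matrix.PosDef.of_dotProduct_mulVec_pos ?_ (fun x hx => ?_)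
  · rw [hsub]
    exact isHermitian_conjTranspose_mul_mul B hM.1
  · have hBx : B *ᵥ x ≠ 0 := by
      obtain ⟨a, ha⟩ := Function.ne_iff.mp hx
      intro h
      apply ha
      have := congrFun h (e a)
      simp only [mulVec, dotProduct, hB, submatrix_apply, id_eq, one_apply, Pi.zero_apply] at this
      rwa [Finset.sum_eq_single a (fun b _ hb => by rw [if_neg (fun h => hb (he h.symm)), zero_mul])
        (by simp), if_pos rfl, one_mul] at this
    have := hM.dotProduct_mulVec_pos hBx
    rw [hsub]
    simpa only [star_mulVec, dotProduct_mulVec, vecMul_vecMul] using this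

lemma det_one_add_psd {E : Matrix p p ℂ} (hE : E.PosSemidef) :
    ∃ r : ℝ, 1 ≤ r ∧ ((1 : Matrix p p ℂ) + E).det = (r : ℂ) := by
  set U : Matrix p p ℂ := (hE.1.eigenvectorUnitary : Matrix p p ℂ) with hUdef
  have hU : U * star U = 1 := (Matrix.mem_unitaryGroup_iff).mp hE.1.eigenvectorUnitary.2
  set d : p → ℂ := Complex.ofReal ∘ hE.1.eigenvalues with hd
  have hdec : (1 : Matrix p p ℂ) + E = U * (1 + diagonal d) * star U := by
    rw [mul_add, add_mul, mul_one, hU]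
    congr 1
    exact hE.1.spectral_theorem
  have hUU : det U * det (star U) = 1 := by rw [← det_mul, hU, det_one]
  refine ⟨∏ i, (1 + hE.1.eigenvalues i), ?_, ?_⟩
  · calc (1:ℝ) = ∏ _i : p, (1:ℝ) := by simp
      _ ≤ ∏ i, (1 + hE.1.eigenvalues i) :=
        Finset.prod_le_prod (fun i _ => zero_le_one)
          (fun i _ => by linarith [hE.eigenvalues_nonneg i])
  · rw [hdec, det_mul, det_mul]
    have : (1 : Matrix p p ℂ) + diagonal d = diagonal (fun i => 1 + d i) := by
      rw [← diagonal_one, diagonal_add]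
    rw [this, det_diagonal]
    push_cast
    rw [mul_comm (det U), mul_assoc, hUU, mul_one]
    rfl

lemma det_re_mono {A D : Matrix p p ℂ} (hA : A.PosDef) (hD : D.PosSemidef) :
    A.det.re ≤ (A + D).det.re := by
  obtain ⟨S, hS, hSH⟩ : ∃ S : Matrix p p ℂ, S * S = A ∧ S.IsHermitian := by
    open scoped MatrixOrder in
    exact ⟨CFC.sqrt A, CFC.sqrt_mul_sqrt_self A hA.posSemidef.nonneg, (CFC.sqrt_nonneg A).isSelfAdjoint⟩
  have hdetS : det S * det S = det A := by rw [← det_mul, hS]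
  have hAdet : (0 : ℂ) < det A := hA.det_pos
  have hSunit : IsUnit S.det := by
    refine isUnit_iff_ne_zero.mpr fun h => ?_
    rw [h, zero_mul] at hdetS
    exact hAdet.ne' hdetS.symm
  have h1 : S * S⁻¹ = 1 := Matrix.mul_nonsing_inv _ hSunit
  have h2 : S⁻¹ * S = 1 := Matrix.nonsing_inv_mul _ hSunit
  set E := S⁻¹ * D * S⁻¹ with hEdef
  have hE : E.PosSemidef := by
    have h3 : E = (S⁻¹)ᴴ * D * S⁻¹ := by rw [hSH.inv.eq]
    rw [h3]
    exact hD.conjTranspose_mul_mul_same _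
  have hdecomp : A + D = S * (1 + E) * S := by
    rw [mul_add, add_mul, mul_one, hS, hEdef]
    congr 1
    rw [← mul_assoc, ← mul_assoc, h1, one_mul, mul_assoc, h2, mul_one]
  obtain ⟨r, hr1, hrdet⟩ := det_one_add_psd hE
  have him : (det A).im = 0 := ((Complex.lt_def.mp hAdet).2).symm
  have hre : 0 < (det A).re := by simpa using (Complex.lt_def.mp hAdet).1
  have hAeq : det A = ((det A).re : ℂ) := by
    exact Complex.ext rfl (by simp [him])
  have hfin : (A + D).det = (((det A).re * r : ℝ) : ℂ) := by
    rw [hdecomp, det_mul, det_mul, hrdet, mul_comm (det S), mul_assoc, hdetS, hAeq]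
    simp [Complex.ofReal_mul]
    ring
  rw [hfin]
  simpa using le_mul_of_one_le_right hre.le hr1

lemma psd_trace_re_nonneg {N : Matrix p p ℂ} (hN : N.PosSemidef) : 0 ≤ N.trace.re := by
  rw [Matrix.trace, Complex.re_sum]
  exact Finset.sum_nonneg fun a _ => psd_diag_re_nonneg hN a

end Aux

theorem feasibility_preserved_under_loewner_decrease
    {I : Type*} [Fintype I] [DecidableEq I] {n : I → ℕ}
    {K : Type*} [Fintype K]
    (C P : I → ℝ) (hC : ∀ i, 0 ≤ C i) (hP : ∀ i, 0 ≤ P i)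
    (R R' : K → Matrix (Σ i, Fin (n i)) (Σ i, Fin (n i)) ℂ)
    (Ω : Matrix (Σ i, Fin (n i)) (Σ i, Fin (n i)) ℂ)
    (hfeas : Feasible C P R Ω 0)
    (hR' : ∀ k, (R' k).PosSemidef)
    (hle : ∀ k, (R k - R' k).PosSemidef) :
    Feasible C P R' Ω 0 := by

  obtain ⟨hRpsd, hΩ, -, -, hgS, htr⟩ := hfeas
  set T : Matrix (Σ i, Fin (n i)) (Σ i, Fin (n i)) ℂ := ∑ k, R k with hT
  set T' : Matrix (Σ i, Fin (n i)) (Σ i, Fin (n i)) ℂ := ∑ k, R' k with hT'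
  have hTpsd : T.PosSemidef := psd_sum R hRpsd
  have hT'psd : T'.PosSemidef := psd_sum R' hR'
  have hdiff : (T - T').PosSemidef := by
    have : T - T' = ∑ k, (R k - R' k) := (Finset.sum_sub_distrib _ _).symm
    rw [this]
    exact psd_sum _ hle
  have hblkadd : ∀ (M N : Matrix (Σ i, Fin (n i)) (Σ i, Fin (n i)) ℂ) (i : I),
      blk (M + N) i = blk M i + blk N i := fun M N i => rfl
  have hTsplit : T = T' + (T - T') := by abel
  refine ⟨hR', hΩ, Matrix.PosSemidef.zero, fun a b _ => rfl, ?_, ?_⟩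
  · intro S hS
    refine le_trans ?_ (hgS S hS)
    unfold gS
    refine sub_le_sub_right (Finset.sum_le_sum fun i _ => ?_) _
    have hinj : Function.Injective (fun a : Fin (n i) => (⟨i, a⟩ : Σ j, Fin (n j))) :=
      fun a b h => by simpa using h
    have hA : (blk (T' + Ω) i).PosDef := posdef_submatrix (Matrix.PosDef.posSemidef_add hT'psd hΩ) hinj
    have hD : (blk (T - T') i).PosSemidef := hdiff.submatrix _
    have hble : blk (T + Ω) i = blk (T' + Ω) i + blk (T - T') i := by
      rw [show T + Ω = (T' + Ω) + (T - T') by abel, hblkadd]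
    unfold logDet
    rw [hble]
    have hre : 0 < (blk (T' + Ω) i).det.re := by
      simpa using (Complex.lt_def.mp hA.det_pos).1
    exact Real.log_le_log hre (det_re_mono hA hD)
  · intro i
    have h := htr i
    have hble : blk T i = blk T' i + blk (T - T') i := by rw [hTsplit, hblkadd]; rw [← hTsplit]
    have h2 : (blk T i).trace.re = (blk T' i).trace.re + (blk (T - T') i).trace.re := by
      rw [hble, Matrix.trace_add, Complex.add_re]
    have h3 : 0 ≤ (blk (T - T') i).trace.re := psd_trace_re_nonneg (hdiff.submatrix _)
    linarith
end

section
/- The convexified secrecy rate function minorizes the true secrecy rate function: fix a user k and a reference point (R⁰, Ω⁰) with each R⁰_l Hermitian positive semidefinite and Ω⁰ Hermitian positive semidefinite (all indexed by J). For (R, Ω) with each R_l Hermitian positive semidefinite and Ω Hermitian positive semidefinite, define T_k(R,Ω) := Σ_{l∈K} H_k R_l H_k^* + H_k Ω H_k^* + Σ_k, I_k(R,Ω) := Σ_{l≠k} H_k R_l H_k^* + H_k Ω H_k^* + Σ_k, and T̄_k(R,Ω), Ī_k(R,Ω) analogously with G_k and Z_k in place of H_k and Σ_k; these are all Hermitian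 positive definite. Define the surrogate f̃_k(R, Ω; R⁰, Ω⁰) := log det T_k(R,Ω) − ψ(I_k(R,Ω), I_k(R⁰,Ω⁰)) − ψ(T̄_k(R,Ω), T̄_k(R⁰,Ω⁰)) + log det Ī_k(R,Ω). Then f̃_k(R, Ω; R⁰, Ω⁰) ≤ f_k(R, Ω) for all such (R, Ω), with equality when (R, Ω) = (R⁰, Ω⁰). -/
open Matrix BigOperators Finset ComplexOrder

noncomputable def psi {p : Type*} [Fintype p] [DecidableEq p] (X Y : Matrix p p ℂ) : ℝ :=
  logDet Y + ((Y⁻¹ * (X - Y)).trace).re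

noncomputable def Tk {I : Type*} [Fintype I] [DecidableEq I] {n : I → ℕ}
    {K : Type*} [Fintype K] {m : K → ℕ}
    (H : ∀ k : K, Matrix (Fin (m k)) (Σ i, Fin (n i)) ℂ)
    (Sig : ∀ k : K, Matrix (Fin (m k)) (Fin (m k)) ℂ)
    (k : K) (R : K → Matrix (Σ i, Fin (n i)) (Σ i, Fin (n i)) ℂ)
    (Ω : Matrix (Σ i, Fin (n i)) (Σ i, Fin (n i)) ℂ) :
    Matrix (Fin (m k)) (Fin (m k)) ℂ :=
  (∑ l : K, H k * R l * (H k)ᴴ) + H k * Ω * (H k)ᴴ + Sig k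

noncomputable def Ik {I : Type*} [Fintype I] [DecidableEq I] {n : I → ℕ}
    {K : Type*} [Fintype K] [DecidableEq K] {m : K → ℕ}
    (H : ∀ k : K, Matrix (Fin (m k)) (Σ i, Fin (n i)) ℂ)
    (Sig : ∀ k : K, Matrix (Fin (m k)) (Fin (m k)) ℂ)
    (k : K) (R : K → Matrix (Σ i, Fin (n i)) (Σ i, Fin (n i)) ℂ)
    (Ω : Matrix (Σ i, Fin (n i)) (Σ i, Fin (n i)) ℂ) :
    Matrix (Fin (m k)) (Fin (m k)) ℂ :=
  (∑ l ∈ Finset.univ.erase k, H k * R l * (H k)ᴴ) + H k * Ω * (H k)ᴴ + Sig k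

noncomputable def ftilde {I : Type*} [Fintype I] [DecidableEq I] {n : I → ℕ}
    {K : Type*} [Fintype K] [DecidableEq K] {m e : K → ℕ}
    (H : ∀ k : K, Matrix (Fin (m k)) (Σ i, Fin (n i)) ℂ)
    (G : ∀ k : K, Matrix (Fin (e k)) (Σ i, Fin (n i)) ℂ)
    (Sig : ∀ k : K, Matrix (Fin (m k)) (Fin (m k)) ℂ)
    (Z : ∀ k : K, Matrix (Fin (e k)) (Fin (e k)) ℂ)
    (k : K) (R : K → Matrix (Σ i, Fin (n i)) (Σ i, Fin (n i)) ℂ)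
    (Ω : Matrix (Σ i, Fin (n i)) (Σ i, Fin (n i)) ℂ)
    (R0 : K → Matrix (Σ i, Fin (n i)) (Σ i, Fin (n i)) ℂ)
    (Ω0 : Matrix (Σ i, Fin (n i)) (Σ i, Fin (n i)) ℂ) : ℝ :=
  logDet (Tk H Sig k R Ω)
    - psi (Ik H Sig k R Ω) (Ik H Sig k R0 Ω0)
    - psi (Tk G Z k R Ω) (Tk G Z k R0 Ω0)
    + logDet (Ik G Z k R Ω)



section AuxLemmas
variable {p : Type*} [Fintype p] [DecidableEq p]

lemma posDef_conj {A B : Matrix p p ℂ} (hA : A.PosDef) (hB : IsUnit B.det) :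
    (Bᴴ * A * B).PosDef := by
  have hinj : Function.Injective B.mulVec :=
    Matrix.mulVec_injective_iff_isUnit.mpr (isUnit_iff_isUnit_det B |>.mpr hB)
  exact hA.conjTranspose_mul_mul_same hinj

lemma det_re_pos {M : Matrix p p ℂ} (hM : M.PosDef) : 0 < M.det.re := by
  have := hM.det_pos
  rw [Complex.lt_def] at this
  simpa using this.1

lemma det_im_zero {M : Matrix p p ℂ} (hM : M.PosDef) : M.det.im = 0 := by
  have := hM.det_pos
  rw [Complex.lt_def] at this
  simpa using this.2.symm

lemma trace_re_eq_sum_eigenvalues {Z : Matrix p p ℂ} (hZ : Z.IsHermitian) :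
    Z.trace.re = ∑ i, hZ.eigenvalues i := by
  have hspec := hZ.spectral_theorem
  have h1 : star (hZ.eigenvectorUnitary : Matrix p p ℂ) * hZ.eigenvectorUnitary = 1 :=
    Unitary.coe_star_mul_self hZ.eigenvectorUnitary
  have : Z.trace = ∑ i, (hZ.eigenvalues i : ℂ) := by
    exact hZ.trace_eq_sum_eigenvalues
  rw [this]
  norm_cast

lemma det_re_eq_prod_eigenvalues {Z : Matrix p p ℂ} (hZ : Z.IsHermitian) :
    Z.det.re = ∏ i, hZ.eigenvalues i := by
  rw [hZ.det_eq_prod_eigenvalues]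
  norm_cast

/-- concavity inequality for a PD matrix: log det Z ≤ Re tr Z - card -/
lemma logDet_le_trace_sub_card {Z : Matrix p p ℂ} (hZ : Z.PosDef) :
    logDet Z ≤ Z.trace.re - Fintype.card p := by
  have hev := hZ.eigenvalues_pos
  rw [logDet, det_re_eq_prod_eigenvalues hZ.isHermitian,
    trace_re_eq_sum_eigenvalues hZ.isHermitian]
  rw [Real.log_prod (fun i _ => (hev i).ne')]
  have h1 : ∀ i ∈ Finset.univ, Real.log (hZ.isHermitian.eigenvalues i)
      ≤ hZ.isHermitian.eigenvalues i - 1 :=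
    fun i _ => Real.log_le_sub_one_of_pos (hev i)
  calc ∑ i, Real.log (hZ.isHermitian.eigenvalues i)
      ≤ ∑ i, (hZ.isHermitian.eigenvalues i - 1) := Finset.sum_le_sum h1
    _ = (∑ i, hZ.isHermitian.eigenvalues i) - Fintype.card p := by
        rw [Finset.sum_sub_distrib]; simp

lemma logDet_le_psi {X Y : Matrix p p ℂ} (hX : X.PosDef) (hY : Y.PosDef) :
    logDet X ≤ psi X Y := by
  obtain ⟨S, hS, hSS⟩ : ∃ S : Matrix p p ℂ, S.PosSemidef ∧ S * S = Y :=
    by open scoped MatrixOrder in exact ⟨CFC.sqrt Y, Matrix.nonneg_iff_posSemidef.mp (CFC.sqrt_nonneg Y),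
      CFC.sqrt_mul_sqrt_self Y (Matrix.nonneg_iff_posSemidef.mpr hY.posSemidef)⟩
  have hSH : S.IsHermitian := hS.isHermitian
  have hYu : IsUnit Y.det := hY.det_pos.ne'.isUnit
  have hSu : IsUnit S.det := by
    have h2 : S.det * S.det = Y.det := by rw [← Matrix.det_mul, hSS]
    have : S.det ≠ 0 := fun h0 => hY.det_pos.ne' (by rw [← h2, h0, mul_zero])
    exact this.isUnit
  have hSiH : (S⁻¹).IsHermitian := hSH.inv
  have hSiu : IsUnit (S⁻¹).det := (isUnit_nonsing_inv_det S hSu)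
  obtain ⟨Z, hZdef⟩ : ∃ Z, Z = S⁻¹ * X * S⁻¹ := ⟨_, rfl⟩
  have hZ : Z.PosDef := by
    have h2 := posDef_conj (B := S⁻¹) hX hSiu
    rw [show (S⁻¹)ᴴ = S⁻¹ from hSiH] at h2
    rwa [← hZdef] at h2
  have hXeq : X = S * Z * S := by
    rw [hZdef]
    rw [show S * (S⁻¹ * X * S⁻¹) * S = (S * S⁻¹) * X * (S⁻¹ * S) by noncomm_ring,
      mul_nonsing_inv S hSu, nonsing_inv_mul S hSu, one_mul, mul_one]
  -- determinant relation
  have hdet : X.det = Y.det * Z.det := by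
    have h5 : X.det = S.det * Z.det * S.det := by rw [hXeq, Matrix.det_mul, Matrix.det_mul]
    have h6 : Y.det = S.det * S.det := by rw [← hSS, Matrix.det_mul]
    rw [h5, h6]; ring
  have hre : X.det.re = Y.det.re * Z.det.re := by
    rw [hdet, Complex.mul_re, det_im_zero hY, zero_mul, sub_zero]
  have hlog : logDet X = logDet Y + logDet Z := by
    rw [logDet, hre, Real.log_mul (det_re_pos hY).ne' (det_re_pos hZ).ne']; rfl
  -- trace relation
  have hYinv : Y⁻¹ = S⁻¹ * S⁻¹ := by rw [← hSS, Matrix.mul_inv_rev]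
  have htr : ((Y⁻¹ * (X - Y)).trace).re = Z.trace.re - Fintype.card p := by
    have h3 : Y⁻¹ * (X - Y) = S⁻¹ * S⁻¹ * X - 1 := by
      rw [mul_sub, hYinv, ← hYinv, nonsing_inv_mul Y hYu]
    have h4 : (S⁻¹ * S⁻¹ * X).trace = Z.trace := by
      rw [hZdef, Matrix.trace_mul_cycle, Matrix.trace_mul_cycle]
    rw [h3, trace_sub, h4, Matrix.trace_one]
    simp
  rw [psi, htr, hlog]
  have := logDet_le_trace_sub_card hZ
  linarith

lemma psi_self {X : Matrix p p ℂ} : psi X X = logDet X := by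
  simp [psi]


end AuxLemmas

theorem surrogate_minorizes_secrecy_rate
    {I : Type*} [Fintype I] [DecidableEq I] {n : I → ℕ}
    {K : Type*} [Fintype K] [DecidableEq K] {m e : K → ℕ}
    (H : ∀ k : K, Matrix (Fin (m k)) (Σ i, Fin (n i)) ℂ)
    (G : ∀ k : K, Matrix (Fin (e k)) (Σ i, Fin (n i)) ℂ)
    (Sig : ∀ k : K, Matrix (Fin (m k)) (Fin (m k)) ℂ)
    (Z : ∀ k : K, Matrix (Fin (e k)) (Fin (e k)) ℂ)
    (k : K) (hSig : (Sig k).PosDef) (hZ : (Z k).PosDef)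
    (R0 R : K → Matrix (Σ i, Fin (n i)) (Σ i, Fin (n i)) ℂ)
    (Ω0 Ω : Matrix (Σ i, Fin (n i)) (Σ i, Fin (n i)) ℂ)
    (hR0 : ∀ l, (R0 l).PosSemidef) (hΩ0 : Ω0.PosSemidef)
    (hR : ∀ l, (R l).PosSemidef) (hΩ : Ω.PosSemidef) :
    ftilde H G Sig Z k R Ω R0 Ω0 ≤ fk H G Sig Z k R Ω ∧
    ftilde H G Sig Z k R0 Ω0 R0 Ω0 = fk H G Sig Z k R0 Ω0 := by
  classical
  -- positive definiteness of the interference-plus-noise and total covariances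
  have psdsum : ∀ {q : ℕ} (A : Matrix (Fin q) (Σ i, Fin (n i)) ℂ) (s : Finset K)
      (R' : K → Matrix (Σ i, Fin (n i)) (Σ i, Fin (n i)) ℂ), (∀ l, (R' l).PosSemidef) →
      (∑ l ∈ s, A * R' l * Aᴴ).PosSemidef := by
    intro q A s R' hR'
    refine Finset.sum_induction _ _ (fun a b ha hb => ha.add hb) .zero ?_
    exact fun l _ => (hR' l).mul_mul_conjTranspose_same A
  have hTkH : ∀ (R' : K → Matrix (Σ i, Fin (n i)) (Σ i, Fin (n i)) ℂ)
      (Ω' : Matrix (Σ i, Fin (n i)) (Σ i, Fin (n i)) ℂ), (∀ l, (R' l).PosSemidef) →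
      Ω'.PosSemidef → (Tk H Sig k R' Ω').PosDef := by
    intro R' Ω' hR' hΩ'
    exact Matrix.PosDef.posSemidef_add
      (((psdsum (H k) Finset.univ R' hR').add (hΩ'.mul_mul_conjTranspose_same (H k)))) hSig
  have hTkG : ∀ (R' : K → Matrix (Σ i, Fin (n i)) (Σ i, Fin (n i)) ℂ)
      (Ω' : Matrix (Σ i, Fin (n i)) (Σ i, Fin (n i)) ℂ), (∀ l, (R' l).PosSemidef) →
      Ω'.PosSemidef → (Tk G Z k R' Ω').PosDef := by
    intro R' Ω' hR' hΩ'
    exact Matrix.PosDef.posSemidef_add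
      (((psdsum (G k) Finset.univ R' hR').add (hΩ'.mul_mul_conjTranspose_same (G k)))) hZ
  have hIkH : ∀ (R' : K → Matrix (Σ i, Fin (n i)) (Σ i, Fin (n i)) ℂ)
      (Ω' : Matrix (Σ i, Fin (n i)) (Σ i, Fin (n i)) ℂ), (∀ l, (R' l).PosSemidef) →
      Ω'.PosSemidef → (Ik H Sig k R' Ω').PosDef := by
    intro R' Ω' hR' hΩ'
    exact Matrix.PosDef.posSemidef_add
      (((psdsum (H k) _ R' hR').add (hΩ'.mul_mul_conjTranspose_same (H k)))) hSig
  have hIkG : ∀ (R' : K → Matrix (Σ i, Fin (n i)) (Σ i, Fin (n i)) ℂ)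
      (Ω' : Matrix (Σ i, Fin (n i)) (Σ i, Fin (n i)) ℂ), (∀ l, (R' l).PosSemidef) →
      Ω'.PosSemidef → (Ik G Z k R' Ω').PosDef := by
    intro R' Ω' hR' hΩ'
    exact Matrix.PosDef.posSemidef_add
      (((psdsum (G k) _ R' hR').add (hΩ'.mul_mul_conjTranspose_same (G k)))) hZ
  -- splitting the total covariance
  have hsplitH : ∀ (R' : K → Matrix (Σ i, Fin (n i)) (Σ i, Fin (n i)) ℂ)
      (Ω' : Matrix (Σ i, Fin (n i)) (Σ i, Fin (n i)) ℂ),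
      Tk H Sig k R' Ω' = H k * R' k * (H k)ᴴ + Ik H Sig k R' Ω' := by
    intro R' Ω'
    unfold Tk Ik
    rw [← Finset.add_sum_erase _ (fun l => H k * R' l * (H k)ᴴ) (Finset.mem_univ k)]
    abel
  have hsplitG : ∀ (R' : K → Matrix (Σ i, Fin (n i)) (Σ i, Fin (n i)) ℂ)
      (Ω' : Matrix (Σ i, Fin (n i)) (Σ i, Fin (n i)) ℂ),
      Tk G Z k R' Ω' = G k * R' k * (G k)ᴴ + Ik G Z k R' Ω' := by
    intro R' Ω'
    unfold Tk Ik
    rw [← Finset.add_sum_erase _ (fun l => G k * R' l * (G k)ᴴ) (Finset.mem_univ k)]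
    abel
  -- the true rate in terms of Tk and Ik
  have hfk : ∀ (R' : K → Matrix (Σ i, Fin (n i)) (Σ i, Fin (n i)) ℂ)
      (Ω' : Matrix (Σ i, Fin (n i)) (Σ i, Fin (n i)) ℂ),
      fk H G Sig Z k R' Ω' = logDet (Tk H Sig k R' Ω') - logDet (Ik H Sig k R' Ω')
        - (logDet (Tk G Z k R' Ω') - logDet (Ik G Z k R' Ω')) := by
    intro R' Ω'
    unfold fk phi
    rw [show (∑ l ∈ Finset.univ.erase k, H k * R' l * (H k)ᴴ) + H k * Ω' * (H k)ᴴ + Sig k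
        = Ik H Sig k R' Ω' from rfl,
      show (∑ l ∈ Finset.univ.erase k, G k * R' l * (G k)ᴴ) + G k * Ω' * (G k)ᴴ + Z k
        = Ik G Z k R' Ω' from rfl, ← hsplitH R' Ω', ← hsplitG R' Ω']
  constructor
  · have h1 : logDet (Ik H Sig k R Ω) ≤ psi (Ik H Sig k R Ω) (Ik H Sig k R0 Ω0) :=
      logDet_le_psi (hIkH R Ω hR hΩ) (hIkH R0 Ω0 hR0 hΩ0)
    have h2 : logDet (Tk G Z k R Ω) ≤ psi (Tk G Z k R Ω) (Tk G Z k R0 Ω0) :=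
      logDet_le_psi (hTkG R Ω hR hΩ) (hTkG R0 Ω0 hR0 hΩ0)
    rw [hfk R Ω]
    unfold ftilde
    linarith
  · rw [hfk R0 Ω0]
    unfold ftilde
    rw [psi_self, psi_self]
    ring
end
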